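/- Let a set of k̃ jobs among n jobs be designated as large, where k̃ ≤ m−1, k̃ ≥ m − H_m, and k̃ + 1 ≥ m/2, and let L denote the total size of the small jobs. For a uniformly random permutation σ, let s(J) denote the number of large jobs preceding the small job J, and set S(J^σ) = Σ_{J small} p_J/(m − s(J)). Then Var_σ[S(J^σ)] ≤ (π²/3) · (H_m²/m) · (L/(m−k̃))². -/

import Mathlib

open Finset

namespace Stmt5Aux

variable {n : ℕ}

/-- rank of `b` within `T` under the position map `σ.symm`. -/
def rnk (T : Finset (Fin n)) (σ : Equiv.Perm (Fin n)) (b : Fin n) : ℕ :=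
  (T.filter fun i => σ.symm i < σ.symm b).card

lemma rnk_eq_cnt (T : Finset (Fin n)) (σ : Equiv.Perm (Fin n)) (b : Fin n) :
    rnk T σ b = ((T.image σ.symm).filter fun v => v < σ.symm b).card := by
  rw [rnk, Finset.filter_image, Finset.card_image_of_injective _ σ.symm.injective]

lemma cnt_lt_cnt (V : Finset (Fin n)) {v w : Fin n} (hv : v ∈ V) (hvw : v < w) :
    (V.filter fun x => x < v).card < (V.filter fun x => x < w).card := by
  apply Finset.card_lt_card
  have hsub : (V.filter fun x => x < v) ⊆ (V.filter fun x => x < w) := by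
    intro x hx
    rcases Finset.mem_filter.1 hx with ⟨h1, h2⟩
    exact Finset.mem_filter.2 ⟨h1, lt_trans h2 hvw⟩
  refine (Finset.ssubset_iff_of_subset hsub).2 ⟨v, Finset.mem_filter.2 ⟨hv, hvw⟩, ?_⟩
  simp

lemma rnk_injOn (T : Finset (Fin n)) (σ : Equiv.Perm (Fin n)) {a b : Fin n}
    (ha : a ∈ T) (hb : b ∈ T) (h : rnk T σ a = rnk T σ b) : a = b := by
  by_contra hne
  have h1 : σ.symm a ≠ σ.symm b := fun e => hne (σ.symm.injective e)
  rcases lt_or_gt_of_ne h1 with hlt | hlt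
  · have := cnt_lt_cnt (T.image σ.symm) (Finset.mem_image_of_mem _ ha) hlt
    rw [← rnk_eq_cnt, ← rnk_eq_cnt] at this
    omega
  · have := cnt_lt_cnt (T.image σ.symm) (Finset.mem_image_of_mem _ hb) hlt
    rw [← rnk_eq_cnt, ← rnk_eq_cnt] at this
    omega

lemma rnk_lt_card (T : Finset (Fin n)) (σ : Equiv.Perm (Fin n)) {b : Fin n} (hb : b ∈ T) :
    rnk T σ b < T.card := by
  apply Finset.card_lt_card
  refine (Finset.ssubset_iff_of_subset (Finset.filter_subset _ _)).2 ⟨b, hb, ?_⟩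
  simp

lemma rnk_surj (T : Finset (Fin n)) (σ : Equiv.Perm (Fin n)) {s : ℕ} (hs : s < T.card) :
    ∃ a ∈ T, rnk T σ a = s := by
  have H := Finset.surj_on_of_inj_on_of_card_le (s := T) (t := Finset.range T.card)
    (fun a _ => rnk T σ a) (fun a ha => Finset.mem_range.2 (rnk_lt_card T σ ha))
    (fun a₁ a₂ h₁ h₂ e => rnk_injOn T σ h₁ h₂ e)
    (by rw [Finset.card_range])
  obtain ⟨a, ha, e⟩ := H s (Finset.mem_range.2 hs)
  exact ⟨a, ha, e.symm⟩

lemma symm_swap_mul (σ : Equiv.Perm (Fin n)) (J a x : Fin n) :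
    (Equiv.swap J a * σ).symm x = σ.symm (Equiv.swap J a x) := by
  simp [Equiv.Perm.mul_def, Equiv.symm_trans_apply]

lemma image_swap (T : Finset (Fin n)) {J a : Fin n} (hJ : J ∈ T) (ha : a ∈ T) :
    T.image (Equiv.swap J a) = T := by
  apply Finset.eq_of_subset_of_card_le
  · intro x hx
    obtain ⟨y, hy, rfl⟩ := Finset.mem_image.1 hx
    rcases eq_or_ne y J with rfl | hyJ
    · simpa [Equiv.swap_apply_left] using ha
    rcases eq_or_ne y a with rfl | hya
    · simpa [Equiv.swap_apply_right] using hJ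
    · rwa [Equiv.swap_apply_of_ne_of_ne hyJ hya]
  · rw [Finset.card_image_of_injective _ (Equiv.swap J a).injective]

lemma image_symm_swap_mul (T : Finset (Fin n)) (σ : Equiv.Perm (Fin n)) {J a : Fin n}
    (hJ : J ∈ T) (ha : a ∈ T) :
    T.image (Equiv.swap J a * σ).symm = T.image σ.symm := by
  have h1 : T.image (Equiv.swap J a * σ).symm
      = T.image (fun x => σ.symm (Equiv.swap J a x)) :=
    Finset.image_congr (fun x _ => symm_swap_mul σ J a x)
  have h2 : (fun x => σ.symm ((Equiv.swap J a) x)) = (⇑σ.symm ∘ ⇑(Equiv.swap J a)) := rfl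
  rw [h1, h2, ← Finset.image_image, image_swap T hJ ha]

lemma rnk_mul_left (T : Finset (Fin n)) (σ : Equiv.Perm (Fin n)) {J a : Fin n}
    (hJ : J ∈ T) (ha : a ∈ T) :
    rnk T (Equiv.swap J a * σ) J = rnk T σ a := by
  rw [rnk_eq_cnt, rnk_eq_cnt, image_symm_swap_mul T σ hJ ha, symm_swap_mul,
    Equiv.swap_apply_left]

lemma rnk_mul_right (T : Finset (Fin n)) (σ : Equiv.Perm (Fin n)) {J a : Fin n}
    (hJ : J ∈ T) (ha : a ∈ T) :
    rnk T (Equiv.swap J a * σ) a = rnk T σ J := by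
  rw [rnk_eq_cnt, rnk_eq_cnt, image_symm_swap_mul T σ hJ ha, symm_swap_mul,
    Equiv.swap_apply_right]

noncomputable def pick (T : Finset (Fin n)) (J : Fin n) (σ : Equiv.Perm (Fin n)) (s : ℕ) :
    Fin n :=
  if h : ∃ a ∈ T, rnk T σ a = s then h.choose else J

lemma pick_spec {T : Finset (Fin n)} {J : Fin n} {σ : Equiv.Perm (Fin n)} {s : ℕ}
    (h : ∃ a ∈ T, rnk T σ a = s) :
    pick T J σ s ∈ T ∧ rnk T σ (pick T J σ s) = s := by
  rw [pick, dif_pos h]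
  exact h.choose_spec

/-- The shift map on permutations: move `J` to rank `s` within `T`. -/
noncomputable def shift (T : Finset (Fin n)) (J : Fin n) (s : ℕ) (σ : Equiv.Perm (Fin n)) :
    Equiv.Perm (Fin n) :=
  Equiv.swap J (pick T J σ s) * σ

lemma rnk_shift {T : Finset (Fin n)} {J : Fin n} (hJ : J ∈ T) (σ : Equiv.Perm (Fin n))
    {s : ℕ} (hs : s < T.card) : rnk T (shift T J s σ) J = s := by
  obtain ⟨ha, he⟩ := pick_spec (J := J) (rnk_surj T σ hs)
  rw [shift, rnk_mul_left T σ hJ ha, he]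

lemma shift_shift {T : Finset (Fin n)} {J : Fin n} (hJ : J ∈ T) (σ : Equiv.Perm (Fin n))
    {s s' : ℕ} (hs' : s' < T.card) (hσ : rnk T σ J = s) :
    shift T J s (shift T J s' σ) = σ := by
  obtain ⟨haT, hra⟩ := pick_spec (J := J) (rnk_surj T σ hs')
  set a := pick T J σ s' with hadef
  set σ' := shift T J s' σ with hσ'def
  have h1 : rnk T σ' a = s := by
    rw [hσ'def, shift, ← hadef, rnk_mul_right T σ hJ haT, hσ]
  have hex : ∃ b ∈ T, rnk T σ' b = s := ⟨a, haT, h1⟩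
  obtain ⟨hbT, hrb⟩ := pick_spec (J := J) hex
  have hb : pick T J σ' s = a := rnk_injOn T σ' hbT haT (hrb.trans h1.symm)
  rw [shift, hb, hσ'def, shift, ← hadef, ← mul_assoc, Equiv.swap_mul_self, one_mul]

lemma card_fiber_eq (T : Finset (Fin n)) {J : Fin n} (hJ : J ∈ T) {s s' : ℕ}
    (hs : s < T.card) (hs' : s' < T.card) :
    (Finset.univ.filter fun σ : Equiv.Perm (Fin n) => rnk T σ J = s).card
      = (Finset.univ.filter fun σ : Equiv.Perm (Fin n) => rnk T σ J = s').card := by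
  refine Finset.card_bij' (fun σ _ => shift T J s' σ) (fun τ _ => shift T J s τ) ?_ ?_ ?_ ?_
  · intro σ hσ
    exact Finset.mem_filter.2 ⟨Finset.mem_univ _, rnk_shift hJ σ hs'⟩
  · intro τ hτ
    exact Finset.mem_filter.2 ⟨Finset.mem_univ _, rnk_shift hJ τ hs⟩
  · intro σ hσ
    exact shift_shift hJ σ hs' (Finset.mem_filter.1 hσ).2
  · intro τ hτ
    exact shift_shift hJ τ hs (Finset.mem_filter.1 hτ).2

lemma sum_fiber (T : Finset (Fin n)) {J : Fin n} (hJ : J ∈ T) (g : ℕ → ℝ) :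
    ∑ σ : Equiv.Perm (Fin n), g (rnk T σ J)
      = ∑ s ∈ Finset.range T.card,
          ((Finset.univ.filter fun σ : Equiv.Perm (Fin n) => rnk T σ J = s).card : ℝ) * g s := by
  rw [← Finset.sum_fiberwise_of_maps_to'
    (fun σ _ => Finset.mem_range.2 (rnk_lt_card T σ hJ)) g]
  exact Finset.sum_congr rfl fun s _ => by
    rw [Finset.sum_const, nsmul_eq_mul]

lemma card_mul_fiber (T : Finset (Fin n)) {J : Fin n} (hJ : J ∈ T) :
    T.card * (Finset.univ.filter fun σ : Equiv.Perm (Fin n) => rnk T σ J = 0).card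
      = Fintype.card (Equiv.Perm (Fin n)) := by
  have hT : 0 < T.card := Finset.card_pos.2 ⟨J, hJ⟩
  have H := Finset.card_eq_sum_card_fiberwise
    (f := fun σ : Equiv.Perm (Fin n) => rnk T σ J) (s := Finset.univ)
    (t := Finset.range T.card) (fun σ _ => Finset.mem_range.2 (rnk_lt_card T σ hJ))
  rw [Finset.card_univ] at H
  rw [H, Finset.sum_congr rfl (fun s hs =>
    card_fiber_eq T hJ (Finset.mem_range.1 hs) hT), Finset.sum_const, Finset.card_range,
    smul_eq_mul]

/-- Key uniformity bound: `T.card * ∑_σ g(rank of J) ≤ |Perm| * ∑_{s < T.card} g s`. -/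
lemma key_bound (T : Finset (Fin n)) {J : Fin n} (hJ : J ∈ T) (g : ℕ → ℝ) :
    (T.card : ℝ) * ∑ σ : Equiv.Perm (Fin n), g (rnk T σ J)
      = (Fintype.card (Equiv.Perm (Fin n)) : ℝ) * ∑ s ∈ Finset.range T.card, g s := by
  have hT : 0 < T.card := Finset.card_pos.2 ⟨J, hJ⟩
  rw [sum_fiber T hJ g]
  rw [Finset.sum_congr rfl (fun s hs => by
    rw [card_fiber_eq T hJ (Finset.mem_range.1 hs) hT])]
  rw [Finset.mul_sum, Finset.mul_sum]
  refine Finset.sum_congr rfl fun s _ => ?_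
  have := card_mul_fiber T hJ
  push_cast [← this]
  ring

lemma basel_bound {m r : ℕ} (hrm : r ≤ m) :
    ∑ s ∈ Finset.range r, ((1:ℝ)/((m:ℝ) - s) - 1/m)^2 ≤ Real.pi^2/6 := by
  have step1 : ∀ s ∈ Finset.range r,
      ((1:ℝ)/((m:ℝ) - s) - 1/m)^2 ≤ 1/(((m - s : ℕ) : ℝ))^2 := by
    intro s hs
    have hsm : s + 1 ≤ m := Nat.succ_le_of_lt (lt_of_lt_of_le (Finset.mem_range.1 hs) hrm)
    have hcast : ((m - s : ℕ) : ℝ) = (m:ℝ) - s := by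
      rw [Nat.cast_sub (by omega)]
    rw [hcast]
    set t : ℝ := (m:ℝ) - s with ht
    have ht1 : (1:ℝ) ≤ t := by
      have : (s:ℝ) + 1 ≤ (m:ℝ) := by exact_mod_cast hsm
      simp only [ht]; linarith
    have htm : t ≤ (m:ℝ) := by
      have : (0:ℝ) ≤ s := Nat.cast_nonneg s
      simp only [ht]; linarith
    have ht0 : (0:ℝ) < t := by linarith
    have hm0 : (0:ℝ) < m := by linarith
    have hba : 1/(m:ℝ) ≤ 1/t := one_div_le_one_div_of_le ht0 htm
    have hb0 : (0:ℝ) ≤ 1/(m:ℝ) := by positivity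
    have ha0 : (0:ℝ) ≤ 1/t := by positivity
    have : ((1:ℝ)/t - 1/m)^2 ≤ (1/t)^2 := by nlinarith
    calc ((1:ℝ)/t - 1/m)^2 ≤ (1/t)^2 := this
      _ = 1/t^2 := by rw [div_pow, one_pow]
  calc ∑ s ∈ Finset.range r, ((1:ℝ)/((m:ℝ) - s) - 1/m)^2
      ≤ ∑ s ∈ Finset.range r, 1/(((m - s : ℕ):ℝ))^2 := Finset.sum_le_sum step1
    _ = ∑ t ∈ (Finset.range r).image (fun s => m - s), 1/((t:ℝ))^2 := by
        rw [Finset.sum_image]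
        intro x hx y hy hxy
        have hx' := Finset.mem_range.1 hx
        have hy' := Finset.mem_range.1 hy
        simp only at hxy
        omega
    _ ≤ ∑' t : ℕ, 1/((t:ℝ))^2 := by
        refine Summable.sum_le_tsum _ (fun i _ => by positivity) hasSum_zeta_two.summable
    _ = Real.pi^2/6 := hasSum_zeta_two.tsum_eq

lemma sumD_bound (T : Finset (Fin n)) {J : Fin n} (hJ : J ∈ T) {m : ℕ} (hm : 1 ≤ m)
    (hTm : T.card ≤ m) (hm2 : (m:ℝ) ≤ 2 * T.card) :
    ∑ σ : Equiv.Perm (Fin n), ((1:ℝ)/((m:ℝ) - rnk T σ J) - 1/m)^2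
      ≤ (Fintype.card (Equiv.Perm (Fin n)) : ℝ) * (Real.pi^2/(3*m)) := by
  set g : ℕ → ℝ := fun s => ((1:ℝ)/((m:ℝ) - s) - 1/m)^2 with hg
  set Sg : ℝ := ∑ σ : Equiv.Perm (Fin n), g (rnk T σ J) with hSg
  have hkey := key_bound T hJ g
  have hbasel : ∑ s ∈ Finset.range T.card, g s ≤ Real.pi^2/6 := basel_bound hTm
  set c : ℝ := (Fintype.card (Equiv.Perm (Fin n)) : ℝ) with hc
  have hc0 : (0:ℝ) ≤ c := Nat.cast_nonneg _
  have hS0 : 0 ≤ Sg := Finset.sum_nonneg fun σ _ => sq_nonneg _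
  have h1 : (m:ℝ) * Sg ≤ 2 * T.card * Sg := mul_le_mul_of_nonneg_right hm2 hS0
  have h2 : (T.card:ℝ) * Sg ≤ c * (Real.pi^2/6) := by
    rw [hkey]
    exact mul_le_mul_of_nonneg_left hbasel hc0
  have hm0 : (0:ℝ) < m := by exact_mod_cast hm
  show Sg ≤ c * (Real.pi^2/(3*m))
  have he : c * (Real.pi^2/(3*m)) = (c * Real.pi^2/3)/m := by ring
  rw [he, le_div_iff₀ hm0, mul_comm]
  nlinarith [h1, h2]

lemma var_le (A B N a : ℝ) (hN : 0 < N) :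
    A/N - (B/N)^2 ≤ (A - 2*a*B + N*a^2)/N := by
  have h : (A - 2*a*B + N*a^2)/N = A/N - 2*a*(B/N) + a^2 := by
    field_simp
  rw [h]
  nlinarith [sq_nonneg (B/N - a)]

end Stmt5Aux

/-- The `j`-th harmonic number `H_j = Σ_{i=1}^j 1/i` (so `H_0 = 0`), as a real number. -/
noncomputable def Hr (j : ℕ) : ℝ := ∑ i ∈ Finset.range j, (1 : ℝ) / (i + 1)

/-- Let a set of `k̃` jobs among `n` jobs be designated as large, where
`k̃ ≤ m − 1`, `k̃ ≥ m − H_m` and `k̃ + 1 ≥ m/2`, and let `L` be the total size of the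
small jobs. For a uniformly random permutation `σ`, with `s(J)` the number of large jobs
preceding the small job `J` and `S(J^σ) = Σ_{J small} p_J / (m − s(J))`, the variance of
`S` satisfies `Var_σ[S(J^σ)] ≤ (π²/3) · (H_m²/m) · (L/(m−k̃))²`. -/
theorem stmt5 {n m : ℕ} (hm : 1 ≤ m) (p : Fin n → ℝ) (hp : ∀ i, 0 ≤ p i)
    (Large : Finset (Fin n)) (ktilde : ℕ) (hcard : Large.card = ktilde)
    (hkm : ktilde + 1 ≤ m) (hkn : ktilde < n)
    (hk1 : (m : ℝ) - Hr m ≤ ktilde) (hk2 : (m : ℝ) / 2 ≤ (ktilde : ℝ) + 1)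
    (L : ℝ) (hL : L = ∑ J ∈ Largeᶜ, p J)
    (S : Equiv.Perm (Fin n) → ℝ)
    (hS : ∀ σ, S σ = ∑ J ∈ Largeᶜ,
        p J / ((m : ℝ) - (Large.filter (fun i => σ.symm i < σ.symm J)).card)) :
    (∑ σ : Equiv.Perm (Fin n), (S σ) ^ 2) / (Fintype.card (Equiv.Perm (Fin n)) : ℝ)
        - ((∑ σ : Equiv.Perm (Fin n), S σ) / (Fintype.card (Equiv.Perm (Fin n)) : ℝ)) ^ 2
      ≤ Real.pi ^ 2 / 3 * ((Hr m) ^ 2 / m) * (L / ((m : ℝ) - ktilde)) ^ 2 := by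
  classical
  set c : ℝ := (Fintype.card (Equiv.Perm (Fin n)) : ℝ) with hcdef
  have hc0 : (0:ℝ) < c := by
    simp only [hcdef]
    exact_mod_cast Fintype.card_pos
  have hm0 : (0:ℝ) < m := by exact_mod_cast hm
  set a : ℝ := L / m with hadef
  set D : Fin n → Equiv.Perm (Fin n) → ℝ := fun J σ =>
    (1:ℝ)/((m : ℝ) - (Large.filter (fun i => σ.symm i < σ.symm J)).card) - 1/m with hD
  -- Step 0 : rewriting S σ - a
  have hSsub : ∀ σ, S σ - a = ∑ J ∈ Largeᶜ, p J * D J σ := by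
    intro σ
    rw [hS σ, hadef, hL, Finset.sum_div, ← Finset.sum_sub_distrib]
    refine Finset.sum_congr rfl fun J _ => ?_
    simp only [hD]
    ring
  -- Step 1 : Cauchy-Schwarz
  have hL0 : 0 ≤ L := hL ▸ Finset.sum_nonneg fun J _ => hp J
  have hCS : ∀ σ, (S σ - a)^2 ≤ L * ∑ J ∈ Largeᶜ, p J * (D J σ)^2 := by
    intro σ
    rw [hSsub σ]
    have hcs := Finset.sum_mul_sq_le_sq_mul_sq Largeᶜ (fun J => Real.sqrt (p J))
      (fun J => Real.sqrt (p J) * D J σ)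
    have e1 : ∑ J ∈ Largeᶜ, Real.sqrt (p J) * (Real.sqrt (p J) * D J σ)
        = ∑ J ∈ Largeᶜ, p J * D J σ :=
      Finset.sum_congr rfl fun J _ => by
        rw [← mul_assoc, Real.mul_self_sqrt (hp J)]
    have e2 : ∑ J ∈ Largeᶜ, (Real.sqrt (p J))^2 = L := by
      rw [hL]
      exact Finset.sum_congr rfl fun J _ => Real.sq_sqrt (hp J)
    have e3 : ∑ J ∈ Largeᶜ, (Real.sqrt (p J) * D J σ)^2
        = ∑ J ∈ Largeᶜ, p J * (D J σ)^2 :=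
      Finset.sum_congr rfl fun J _ => by
        rw [mul_pow, Real.sq_sqrt (hp J)]
    rw [e1, e2, e3] at hcs
    exact hcs
  -- Step 2 : per-job second moment bound
  have hperJ : ∀ J ∈ Largeᶜ, ∑ σ : Equiv.Perm (Fin n), (D J σ)^2
      ≤ c * (Real.pi^2/(3*m)) := by
    intro J hJ
    have hJL : J ∉ Large := Finset.mem_compl.1 hJ
    have hJT : J ∈ insert J Large := Finset.mem_insert_self J Large
    have hcardT : (insert J Large).card = ktilde + 1 := by
      rw [Finset.card_insert_of_notMem hJL, hcard]
    have hrnk : ∀ σ : Equiv.Perm (Fin n),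
        (Large.filter (fun i => σ.symm i < σ.symm J)).card
          = Stmt5Aux.rnk (insert J Large) σ J := by
      intro σ
      rw [Stmt5Aux.rnk, Finset.filter_insert, if_neg (by simp)]
    have := Stmt5Aux.sumD_bound (insert J Large) hJT hm
      (by rw [hcardT]; exact hkm)
      (by rw [hcardT]; push_cast; linarith)
    rw [← hcdef] at this
    refine le_trans (le_of_eq ?_) this
    refine Finset.sum_congr rfl fun σ _ => ?_
    simp only [hD, hrnk σ]
  -- Step 3 : sum the pointwise CS bound over σ
  have h1 : ∑ σ : Equiv.Perm (Fin n), (S σ - a)^2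
      ≤ L * (L * (c * (Real.pi^2/(3*m)))) := by
    calc ∑ σ : Equiv.Perm (Fin n), (S σ - a)^2
        ≤ ∑ σ : Equiv.Perm (Fin n), L * ∑ J ∈ Largeᶜ, p J * (D J σ)^2 :=
          Finset.sum_le_sum fun σ _ => hCS σ
      _ = L * ∑ J ∈ Largeᶜ, p J * ∑ σ : Equiv.Perm (Fin n), (D J σ)^2 := by
          rw [← Finset.mul_sum]
          congr 1
          rw [Finset.sum_comm]
          exact Finset.sum_congr rfl fun J _ => (Finset.mul_sum _ _ _).symm
      _ ≤ L * ∑ J ∈ Largeᶜ, p J * (c * (Real.pi^2/(3*m))) := by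
          refine mul_le_mul_of_nonneg_left (Finset.sum_le_sum fun J hJ => ?_) hL0
          exact mul_le_mul_of_nonneg_left (hperJ J hJ) (hp J)
      _ = L * (L * (c * (Real.pi^2/(3*m)))) := by
          rw [← Finset.sum_mul, ← hL]
  -- Step 4 : variance is at most second moment about a
  have hexp : ∑ σ : Equiv.Perm (Fin n), (S σ - a)^2
      = (∑ σ : Equiv.Perm (Fin n), S σ^2) - 2*a*(∑ σ : Equiv.Perm (Fin n), S σ) + c*a^2 := by
    have hterm : ∀ σ : Equiv.Perm (Fin n), (S σ - a)^2 = S σ^2 - 2*a*S σ + a^2 :=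
      fun σ => by ring
    rw [Finset.sum_congr rfl fun σ _ => hterm σ, Finset.sum_add_distrib,
      Finset.sum_sub_distrib, ← Finset.mul_sum, Finset.sum_const, Finset.card_univ,
      nsmul_eq_mul, hcdef]
  have hvar : (∑ σ : Equiv.Perm (Fin n), (S σ)^2) / c
      - ((∑ σ : Equiv.Perm (Fin n), S σ) / c)^2
      ≤ (∑ σ : Equiv.Perm (Fin n), (S σ - a)^2) / c := by
    rw [hexp]
    exact Stmt5Aux.var_le _ _ _ _ hc0
  -- Step 5 : combine and compare with the target
  have h2 : (∑ σ : Equiv.Perm (Fin n), (S σ - a)^2) / c ≤ L^2 * Real.pi^2/(3*m) := by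
    have hdiv : (∑ σ : Equiv.Perm (Fin n), (S σ - a)^2) / c
        ≤ (L * (L * (c * (Real.pi^2/(3*m))))) / c := by gcongr
    have heq2 : (L * (L * (c * (Real.pi^2/(3*m))))) / c = L^2 * Real.pi^2/(3*m) := by
      field_simp
    rw [heq2] at hdiv
    exact hdiv
  have hfinal : L^2 * Real.pi^2/(3*m)
      ≤ Real.pi ^ 2 / 3 * ((Hr m) ^ 2 / m) * (L / ((m : ℝ) - ktilde)) ^ 2 := by
    set x : ℝ := (m:ℝ) - ktilde with hx
    have hk' : ((ktilde:ℝ) + 1) ≤ (m:ℝ) := by exact_mod_cast hkm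
    have hx1 : (1:ℝ) ≤ x := by simp only [hx]; linarith
    have hxH : x ≤ Hr m := by simp only [hx]; linarith
    have hx0 : (0:ℝ) < x := by linarith
    have hxx : x^2 ≤ (Hr m)^2 := by nlinarith
    have hq0 : (0:ℝ) ≤ L^2/x^2 := by positivity
    have heq3 : x^2*(L^2/x^2) = L^2 := by field_simp
    have h6 : L^2 ≤ (Hr m)^2*(L^2/x^2) := by
      nlinarith [mul_le_mul_of_nonneg_right hxx hq0]
    have hpi : (0:ℝ) ≤ Real.pi^2/(3*m) := by positivity
    calc L^2*Real.pi^2/(3*m) = Real.pi^2/(3*m)*L^2 := by ring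
      _ ≤ Real.pi^2/(3*m)*((Hr m)^2*(L^2/x^2)) := mul_le_mul_of_nonneg_left h6 hpi
      _ = Real.pi^2/3*((Hr m)^2/m)*(L/x)^2 := by rw [div_pow]; ring
  exact le_trans (le_trans hvar h2) hfinal
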